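/- A morphism p : A → B in Set^𝕋 is invariant under clock introduction if and only if for every time object (ℰ, δ), every clock λ ∉ ℰ and every n ∈ ℕ, the naturality square with top edge A(ι) : A(ℰ, δ) → A(ℰ ∪ {λ}, δ[λ ↦ n]), left edge the component p_{(ℰ, δ)}, right edge the component p_{(ℰ ∪ {λ}, δ[λ ↦ n])}, and bottom edge B(ι) : B(ℰ, δ) → B(ℰ ∪ {λ}, δ[λ ↦ n]), where ι : (ℰ, δ) → (ℰ ∪ {λ}, δ[λ ↦ n]) is the inclusion, is a pullback square of sets. -/

import Mathlib

open CategoryTheory CategoryTheory.Limits Opposite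

/-- A time object: a finite set of clocks together with the number of ticks left on each. -/
structure TimeObj (C : Type) where
  E : Finset C
  d : {x // x ∈ E} → ℕ

/-- A morphism of time objects. -/
structure TimeHom {C : Type} (A B : TimeObj C) where
  toFun : {x // x ∈ A.E} → {x // x ∈ B.E}
  le : ∀ x, B.d (toFun x) ≤ A.d x

theorem TimeHom.ext' {C : Type} {A B : TimeObj C} {f g : TimeHom A B}
    (h : f.toFun = g.toFun) : f = g := by
  cases f; cases g; cases h; rfl

/-- The category 𝕋 of time objects. -/
instance TimeCat (C : Type) : Category (TimeObj C) where
  Hom := TimeHom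
  id _ := ⟨fun x => x, fun _ => le_rfl⟩
  comp f g := ⟨TimeHom.toFun g ∘ TimeHom.toFun f,
    fun x => le_trans (TimeHom.le g _) (TimeHom.le f _)⟩
  id_comp _ := rfl
  comp_id _ := rfl
  assoc _ _ _ := rfl

/-- The time object `({λ}, n)`. -/
def single (C : Type) (l : C) (n : ℕ) : TimeObj C :=
  ⟨{l}, fun _ => n⟩

/-- The object of clocks 𝒞 in `Set^𝕋`. -/
def Clocks (C : Type) : TimeObj C ⥤ Type where
  obj A := {x // x ∈ A.E}
  map f := TypeCat.ofHom (TimeHom.toFun f)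
  map_id _ := rfl
  map_comp _ _ := rfl

open MonoidalCategory

/-- In a category with (chosen) finite products, a morphism `p : A ⟶ B` is
*orthogonal* to an object `X` if every commuting square whose left edge is a
projection `Y ⊗ X ⟶ Y` and whose right edge is `p` has a unique diagonal filler. -/
def OrthogonalTo {𝒞 : Type u} [Category.{v} 𝒞] [CartesianMonoidalCategory 𝒞]
    {A B : 𝒞} (p : A ⟶ B) (X : 𝒞) : Prop :=
  ∀ (Y : 𝒞) (f : Y ⊗ X ⟶ A) (g : Y ⟶ B),
    f ≫ p = CartesianMonoidalCategory.fst Y X ≫ g →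
      ∃! h : Y ⟶ A, CartesianMonoidalCategory.fst Y X ≫ h = f ∧ h ≫ p = g

/-- A morphism of presheaves on 𝕋 is invariant under clock introduction if it is
orthogonal to every representable `y({λ}, n)`. -/
def InvariantUnderClockIntro {C : Type} {A B : TimeObj C ⥤ Type} (p : A ⟶ B) : Prop :=
  ∀ (l : C) (n : ℕ), OrthogonalTo p (coyoneda.obj (op (single C l n)))

/-- The time object `(ℰ ∪ {λ}, δ[λ ↦ n])`. -/
def TimeObj.extend {C : Type} [DecidableEq C] (A : TimeObj C) (l : C) (n : ℕ) :
    TimeObj C where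
  E := insert l A.E
  d x := if h : x.1 ∈ A.E then A.d ⟨x.1, h⟩ else n

/-- The inclusion `(ℰ, δ) ⟶ (ℰ ∪ {λ}, δ[λ ↦ n])`. -/
def inclExtend {C : Type} [DecidableEq C] (A : TimeObj C) (l : C) (n : ℕ) :
    A ⟶ A.extend l n :=
  ⟨fun x => ⟨x.1, Finset.mem_insert_of_mem x.2⟩, fun x => by
    dsimp [TimeObj.extend]
    simp [x.2]⟩

/-! ### Auxiliary material for the proof -/

section TypesPullback

universe w
variable {P X Y Z : Type w} {fst : P ⟶ X} {snd : P ⟶ Y} {f : X ⟶ Z} {g : Y ⟶ Z}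

lemma types_isPullback_of (comm : ∀ a, f (fst a) = g (snd a))
    (H : ∀ x y, f x = g y → ∃! a, fst a = x ∧ snd a = y) :
    IsPullback fst snd f g := by
  refine IsPullback.of_isLimit' ⟨ConcreteCategory.hom_ext _ _ comm⟩ ?_
  apply (PullbackCone.isLimitEquivBijective _).symm.toFun
  constructor
  · intro a b hab
    obtain ⟨c, -, hc⟩ := H (fst a) (snd a) (comm a)
    have h1 := congrArg (fun t => t.1.1) hab
    have h2 := congrArg (fun t => t.1.2) hab
    exact (hc a ⟨rfl, rfl⟩).trans (hc b ⟨h1.symm, h2.symm⟩).symm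
  · rintro ⟨⟨x, y⟩, hxy⟩
    obtain ⟨a, ⟨ha1, ha2⟩, -⟩ := H x y hxy
    exact ⟨a, Subtype.ext (Prod.ext ha1 ha2)⟩

lemma types_isPullback_existsUnique (H : IsPullback fst snd f g) (x : X) (y : Y)
    (hxy : f x = g y) : ∃! a, fst a = x ∧ snd a = y := by
  have hb := (PullbackCone.isLimitEquivBijective H.cone) H.isLimit
  obtain ⟨a, ha⟩ := hb.2 ⟨⟨x, y⟩, hxy⟩
  have h1 := congrArg (fun t => t.1.1) ha
  have h2 := congrArg (fun t => t.1.2) ha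
  refine ⟨a, ⟨h1, h2⟩, ?_⟩
  rintro b ⟨hb1, hb2⟩
  apply hb.1
  exact Subtype.ext (Prod.ext (hb1.trans h1.symm) (hb2.trans h2.symm))

end TypesPullback

section TimeAux

variable {C : Type} [DecidableEq C]

/-- The unique clock of `single C l n`. -/
def spt (l : C) (n : ℕ) : {x // x ∈ (single C l n).E} :=
  ⟨l, Finset.mem_singleton_self l⟩

lemma eq_spt {l : C} {n : ℕ} (x : {x // x ∈ (single C l n).E}) : x = spt l n :=
  Subtype.ext (Finset.mem_singleton.mp x.2)

/-- Glue a map out of `E` and a map out of `single l n` to a map out of `E.extend l n`. -/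
def glue {E D : TimeObj C} (l : C) (n : ℕ) (σ : E ⟶ D) (e : single C l n ⟶ D) :
    E.extend l n ⟶ D where
  toFun x := if h : x.1 ∈ E.E then σ.toFun ⟨x.1, h⟩ else e.toFun (spt l n)
  le x := by
    dsimp [TimeObj.extend]
    by_cases h : x.1 ∈ E.E
    · rw [dif_pos h, dif_pos h]; exact TimeHom.le σ _
    · rw [dif_neg h, dif_neg h]; exact TimeHom.le e _

/-- The map `single l n ⟶ E.extend μ n` hitting the fresh clock `μ`. -/
def elt (l : C) {μ : C} (n : ℕ) (E : TimeObj C) (hμ : μ ∉ E.E) :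
    single C l n ⟶ E.extend μ n where
  toFun _ := ⟨μ, Finset.mem_insert_self μ E.E⟩
  le x := by
    dsimp [TimeObj.extend, single]
    rw [dif_neg hμ]

/-- Change the source of a map out of a one-clock time object. -/
def reclock (l : C) {μ : C} {n : ℕ} {T : TimeObj C} (e : single C μ n ⟶ T) :
    single C l n ⟶ T where
  toFun _ := e.toFun (spt μ n)
  le _ := TimeHom.le e _

lemma incl_glue {E D : TimeObj C} (l : C) (n : ℕ) (σ : E ⟶ D) (e : single C l n ⟶ D) :
    inclExtend E l n ≫ glue l n σ e = σ := by
  apply TimeHom.ext'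
  funext x
  show (glue l n σ e).toFun ⟨x.1, _⟩ = σ.toFun x
  dsimp [glue]
  simp [x.2]

lemma elt_glue {E D : TimeObj C} (l : C) {μ : C} (n : ℕ) (hμ : μ ∉ E.E)
    (σ : E ⟶ D) (e : single C μ n ⟶ D) :
    elt l n E hμ ≫ glue μ n σ e = reclock l e := by
  apply TimeHom.ext'
  funext x
  show (glue μ n σ e).toFun ⟨μ, _⟩ = _
  dsimp [glue, reclock]
  rw [dif_neg hμ]

lemma reclock_elt {E : TimeObj C} (l : C) {μ ν : C} {n : ℕ} (hν : ν ∉ E.E) :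
    reclock l (elt μ n E hν) = elt l n E hν := by
  apply TimeHom.ext'
  rfl

lemma reclock_reclock_self {l μ : C} {n : ℕ} {T : TimeObj C} (e : single C l n ⟶ T) :
    reclock l (reclock μ e) = e := by
  apply TimeHom.ext'
  funext x
  show e.toFun (spt l n) = e.toFun x
  rw [eq_spt x]

lemma glue_comp {E D D' : TimeObj C} (l : C) (n : ℕ) (σ : E ⟶ D) (e : single C l n ⟶ D)
    (τ : D ⟶ D') : glue l n σ e ≫ τ = glue l n (σ ≫ τ) (e ≫ τ) := by
  apply TimeHom.ext'
  funext x
  show τ.toFun ((glue l n σ e).toFun x) = (glue l n (σ ≫ τ) (e ≫ τ)).toFun x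
  dsimp [glue]
  by_cases h : x.1 ∈ E.E
  · rw [dif_pos h, dif_pos h]; rfl
  · rw [dif_neg h, dif_neg h]; rfl

lemma glue_incl_elt {E : TimeObj C} {l : C} (n : ℕ) (hl : l ∉ E.E) :
    glue l n (inclExtend E l n) (elt l n E hl) = 𝟙 (E.extend l n) := by
  apply TimeHom.ext'
  funext x
  show (glue l n (inclExtend E l n) (elt l n E hl)).toFun x = x
  dsimp [glue]
  by_cases h : x.1 ∈ E.E
  · rw [dif_pos h]; rfl
  · rw [dif_neg h]
    refine Subtype.ext ?_
    dsimp [elt]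
    rcases Finset.mem_insert.mp x.2 with h' | h'
    · exact h'.symm
    · exact absurd h' h

end TimeAux

/-- A morphism `p : A ⟶ B` of presheaves on 𝕋 is invariant under clock introduction
iff for every time object `(ℰ, δ)`, clock `λ ∉ ℰ` and `n : ℕ`, the naturality square
of `p` at the inclusion `ι : (ℰ, δ) ⟶ (ℰ ∪ {λ}, δ[λ ↦ n])` is a pullback of sets. -/
theorem statement_6 (C : Type) [Countable C] [Infinite C] [DecidableEq C]
    {A B : TimeObj C ⥤ Type} (p : A ⟶ B) :
    InvariantUnderClockIntro p ↔
      ∀ (Eδ : TimeObj C) (l : C), l ∉ Eδ.E → ∀ n : ℕ,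
        IsPullback (A.map (inclExtend Eδ l n)) (p.app Eδ)
          (p.app (Eδ.extend l n)) (B.map (inclExtend Eδ l n)) := by
  constructor
  · -- invariance implies the squares are pullbacks
    intro inv Eδ l hl n
    apply types_isPullback_of
    · intro a
      exact NatTrans.naturality_apply p (inclExtend Eδ l n) a
    · intro a' b hab
      let Y := coyoneda.obj (op Eδ)
      let fc : Y ⊗ coyoneda.obj (op (single C l n)) ⟶ A :=
        { app := fun D => TypeCat.ofHom fun (z : Y.obj D × (single C l n ⟶ D)) => A.map (glue l n z.1 z.2) a'
          naturality := by
            intro D D' τ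
            refine ConcreteCategory.hom_ext _ _ fun z => ?_
            show A.map (glue l n (z.1 ≫ τ) (z.2 ≫ τ)) a' = A.map τ (A.map (glue l n z.1 z.2) a')
            rw [← FunctorToTypes.map_comp_apply, glue_comp] }
      let gc : Y ⟶ B :=
        { app := fun D => TypeCat.ofHom fun (σ : Eδ ⟶ D) => B.map σ b
          naturality := by
            intro D D' τ
            refine ConcreteCategory.hom_ext _ _ fun σ => ?_
            show B.map (σ ≫ τ) b = B.map τ (B.map σ b)
            rw [FunctorToTypes.map_comp_apply] }
      have comm : fc ≫ p = CartesianMonoidalCategory.fst _ _ ≫ gc := by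
        apply NatTrans.ext
        funext D
        refine ConcreteCategory.hom_ext _ _ fun z => ?_
        show p.app D (A.map (glue l n z.1 z.2) a') = B.map z.1 b
        rw [NatTrans.naturality_apply p, hab, ← FunctorToTypes.map_comp_apply, incl_glue]
      obtain ⟨h, ⟨hfst, hp⟩, huniq⟩ := inv l n Y fc gc comm
      refine ⟨h.app Eδ (𝟙 Eδ), ⟨?_, ?_⟩, ?_⟩
      · have h1 := NatTrans.naturality_apply h (inclExtend Eδ l n) (𝟙 Eδ)
        have h2 := ConcreteCategory.congr_hom (congrArg (fun t => NatTrans.app t (Eδ.extend l n)) hfst)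
          ((inclExtend Eδ l n, elt l n Eδ hl) :
            (Eδ ⟶ Eδ.extend l n) × (single C l n ⟶ Eδ.extend l n))
        calc A.map (inclExtend Eδ l n) (h.app Eδ (𝟙 Eδ))
            = h.app (Eδ.extend l n) (Y.map (inclExtend Eδ l n) (𝟙 Eδ)) := h1.symm
          _ = h.app (Eδ.extend l n) (inclExtend Eδ l n) := by
              rw [show Y.map (inclExtend Eδ l n) (𝟙 Eδ) = inclExtend Eδ l n from
                Category.id_comp (inclExtend Eδ l n)]
          _ = A.map (glue l n (inclExtend Eδ l n) (elt l n Eδ hl)) a' := h2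
          _ = a' := by rw [glue_incl_elt n hl, FunctorToTypes.map_id_apply]
      · have := ConcreteCategory.congr_hom (congrArg (fun t => NatTrans.app t Eδ) hp) (𝟙 Eδ)
        exact this.trans (FunctorToTypes.map_id_apply B b)
      · rintro a₀ ⟨e1, e2⟩
        let h' : Y ⟶ A :=
          { app := fun D => TypeCat.ofHom fun (σ : Eδ ⟶ D) => A.map σ a₀
            naturality := by
              intro D D' τ
              refine ConcreteCategory.hom_ext _ _ fun σ => ?_
              show A.map (σ ≫ τ) a₀ = A.map τ (A.map σ a₀)
              rw [FunctorToTypes.map_comp_apply] }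
        have hh : h' = h := by
          apply huniq
          constructor
          · apply NatTrans.ext
            funext D
            refine ConcreteCategory.hom_ext _ _ fun z => ?_
            show A.map z.1 a₀ = A.map (glue l n z.1 z.2) a'
            rw [← e1, ← FunctorToTypes.map_comp_apply, incl_glue]
          · apply NatTrans.ext
            funext D
            refine ConcreteCategory.hom_ext _ _ fun σ => ?_
            show p.app D (A.map σ a₀) = B.map σ b
            rw [NatTrans.naturality_apply p, e2]
        have := ConcreteCategory.congr_hom (congrArg (fun t => NatTrans.app t Eδ) hh) (𝟙 Eδ)
        exact (FunctorToTypes.map_id_apply A a₀).symm.trans this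
  · -- the squares being pullbacks implies invariance
    intro hpb l n Y fc gc comm
    have comm' : ∀ (D : TimeObj C) (z : Y.obj D × (single C l n ⟶ D)),
        p.app D (fc.app D z) = gc.app D z.1 :=
      fun D z => ConcreteCategory.congr_hom (congrArg (fun t => NatTrans.app t D) comm) z
    have pbEU : ∀ (E : TimeObj C) (μ : C), μ ∉ E.E →
        ∀ (x : A.obj (E.extend μ n)) (b : B.obj E),
        p.app (E.extend μ n) x = B.map (inclExtend E μ n) b →
        ∃! a, A.map (inclExtend E μ n) a = x ∧ p.app E a = b :=
      fun E μ hμ x b hb => types_isPullback_existsUnique (hpb E μ hμ n) x b hb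
    have inj : ∀ (E : TimeObj C) (μ : C), μ ∉ E.E → ∀ (a a' : A.obj E),
        A.map (inclExtend E μ n) a = A.map (inclExtend E μ n) a' →
        p.app E a = p.app E a' → a = a' := by
      intro E μ hμ a a' e1 e2
      obtain ⟨c, -, hc⟩ := pbEU E μ hμ (A.map (inclExtend E μ n) a) (p.app E a)
        (NatTrans.naturality_apply p (inclExtend E μ n) a)
      exact (hc a ⟨rfl, rfl⟩).trans (hc a' ⟨e1.symm, e2.symm⟩).symm
    have exu : ∀ (E : TimeObj C) (μ : C) (hμ : μ ∉ E.E) (y : Y.obj E),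
        ∃! a, A.map (inclExtend E μ n) a
            = fc.app (E.extend μ n) (Y.map (inclExtend E μ n) y, elt l n E hμ)
          ∧ p.app E a = gc.app E y := by
      intro E μ hμ y
      apply pbEU E μ hμ
      calc p.app _ (fc.app _ (Y.map (inclExtend E μ n) y, elt l n E hμ))
          = gc.app _ (Y.map (inclExtend E μ n) y) := comm' _ _
        _ = B.map (inclExtend E μ n) (gc.app E y) := NatTrans.naturality_apply gc _ y
    choose hA hspec using fun (E : TimeObj C) (y : Y.obj E) =>
      (exu E (Infinite.exists_notMem_finset E.E).choose
        (Infinite.exists_notMem_finset E.E).choose_spec y).exists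
    have key : ∀ (E : TimeObj C) (y : Y.obj E) (μ : C) (hμ : μ ∉ E.E),
        A.map (inclExtend E μ n) (hA E y)
          = fc.app (E.extend μ n) (Y.map (inclExtend E μ n) y, elt l n E hμ)
        ∧ p.app E (hA E y) = gc.app E y := by
      intro E y μ hμ
      have hμ₀ : (Infinite.exists_notMem_finset E.E).choose ∉ E.E :=
        (Infinite.exists_notMem_finset E.E).choose_spec
      set μ₀ := (Infinite.exists_notMem_finset E.E).choose with hμ₀def
      obtain ⟨k1, k2⟩ := hspec E y
      refine ⟨?_, k2⟩
      set τ := glue μ₀ n (inclExtend E μ n) (elt μ₀ n E hμ) with hτ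
      have e1 : inclExtend E μ₀ n ≫ τ = inclExtend E μ n := incl_glue _ _ _ _
      have ez : ((Y.map τ (Y.map (inclExtend E μ₀ n) y), elt l n E hμ₀ ≫ τ) :
            Y.obj (E.extend μ n) × (single C l n ⟶ E.extend μ n))
          = (Y.map (inclExtend E μ n) y, elt l n E hμ) := by
        rw [← FunctorToTypes.map_comp_apply, e1, hτ, elt_glue, reclock_elt]
      calc A.map (inclExtend E μ n) (hA E y)
          = A.map (inclExtend E μ₀ n ≫ τ) (hA E y) := by rw [e1]
        _ = A.map τ (A.map (inclExtend E μ₀ n) (hA E y)) := by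
            rw [FunctorToTypes.map_comp_apply]
        _ = A.map τ (fc.app _ (Y.map (inclExtend E μ₀ n) y, elt l n E hμ₀)) := by rw [k1]
        _ = fc.app _ (Y.map τ (Y.map (inclExtend E μ₀ n) y), elt l n E hμ₀ ≫ τ) :=
            (NatTrans.naturality_apply fc τ _).symm
        _ = fc.app _ (Y.map (inclExtend E μ n) y, elt l n E hμ) := by rw [ez]
    have hnat : ∀ (E D : TimeObj C) (τ : E ⟶ D) (y : Y.obj E),
        A.map τ (hA E y) = hA D (Y.map τ y) := by
      intro E D τ y
      obtain ⟨ν, hν⟩ := Infinite.exists_notMem_finset (E.E ∪ D.E)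
      have hνE : ν ∉ E.E := fun h => hν (Finset.mem_union_left _ h)
      have hνD : ν ∉ D.E := fun h => hν (Finset.mem_union_right _ h)
      apply inj D ν hνD
      · set τ' := glue ν n (τ ≫ inclExtend D ν n) (elt ν n D hνD) with hτ'
        have e1 : inclExtend E ν n ≫ τ' = τ ≫ inclExtend D ν n := incl_glue _ _ _ _
        have e2 : elt l n E hνE ≫ τ' = elt l n D hνD := by
          rw [hτ', elt_glue, reclock_elt]
        have ez : ((Y.map τ' (Y.map (inclExtend E ν n) y), elt l n E hνE ≫ τ') :
              Y.obj (D.extend ν n) × (single C l n ⟶ D.extend ν n))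
            = (Y.map (inclExtend D ν n) (Y.map τ y), elt l n D hνD) := by
          rw [← FunctorToTypes.map_comp_apply, e1, e2, FunctorToTypes.map_comp_apply]
        calc A.map (inclExtend D ν n) (A.map τ (hA E y))
            = A.map (τ ≫ inclExtend D ν n) (hA E y) := by
              rw [FunctorToTypes.map_comp_apply]
          _ = A.map (inclExtend E ν n ≫ τ') (hA E y) := by rw [e1]
          _ = A.map τ' (A.map (inclExtend E ν n) (hA E y)) := by
              rw [FunctorToTypes.map_comp_apply]
          _ = A.map τ' (fc.app _ (Y.map (inclExtend E ν n) y, elt l n E hνE)) := by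
              rw [(key E y ν hνE).1]
          _ = fc.app _ (Y.map τ' (Y.map (inclExtend E ν n) y), elt l n E hνE ≫ τ') :=
              (NatTrans.naturality_apply fc τ' _).symm
          _ = fc.app _ (Y.map (inclExtend D ν n) (Y.map τ y), elt l n D hνD) := by rw [ez]
          _ = A.map (inclExtend D ν n) (hA D (Y.map τ y)) := ((key D (Y.map τ y) ν hνD).1).symm
      · calc p.app D (A.map τ (hA E y))
            = B.map τ (p.app E (hA E y)) := NatTrans.naturality_apply p τ _
          _ = B.map τ (gc.app E y) := by rw [(hspec E y).2]
          _ = gc.app D (Y.map τ y) := (NatTrans.naturality_apply gc τ y).symm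
          _ = p.app D (hA D (Y.map τ y)) := ((key D (Y.map τ y) _
              (Infinite.exists_notMem_finset D.E).choose_spec).2).symm
    refine ⟨{ app := fun E => TypeCat.ofHom (hA E),
              naturality := by
                intro E D τ
                refine ConcreteCategory.hom_ext _ _ fun y => ?_
                exact (hnat E D τ y).symm }, ⟨?_, ?_⟩, ?_⟩
    · apply NatTrans.ext
      funext D
      refine ConcreteCategory.hom_ext _ _ fun z => ?_
      show hA D z.1 = fc.app D z
      obtain ⟨μ, hμ⟩ := Infinite.exists_notMem_finset D.E
      apply inj D μ hμ
      · set σr := glue μ n (inclExtend D μ n)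
          (reclock μ (z.2 ≫ inclExtend D μ n)) with hσr
        have e1 : inclExtend D μ n ≫ σr = inclExtend D μ n := incl_glue _ _ _ _
        have e2 : elt l n D hμ ≫ σr = z.2 ≫ inclExtend D μ n := by
          rw [hσr, elt_glue, reclock_reclock_self]
        have ez : ((Y.map σr (Y.map (inclExtend D μ n) z.1), elt l n D hμ ≫ σr) :
              Y.obj (D.extend μ n) × (single C l n ⟶ D.extend μ n))
            = (Y.map (inclExtend D μ n) z.1, z.2 ≫ inclExtend D μ n) := by
          rw [← FunctorToTypes.map_comp_apply, e1, e2]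
        calc A.map (inclExtend D μ n) (hA D z.1)
            = fc.app _ (Y.map (inclExtend D μ n) z.1, elt l n D hμ) := (key D z.1 μ hμ).1
          _ = A.map (inclExtend D μ n ≫ σr) (hA D z.1) := by rw [e1, (key D z.1 μ hμ).1]
          _ = A.map σr (A.map (inclExtend D μ n) (hA D z.1)) := by
              rw [FunctorToTypes.map_comp_apply]
          _ = A.map σr (fc.app _ (Y.map (inclExtend D μ n) z.1, elt l n D hμ)) := by
              rw [(key D z.1 μ hμ).1]
          _ = fc.app _ (Y.map σr (Y.map (inclExtend D μ n) z.1), elt l n D hμ ≫ σr) :=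
              (NatTrans.naturality_apply fc σr _).symm
          _ = fc.app _ (Y.map (inclExtend D μ n) z.1, z.2 ≫ inclExtend D μ n) := by rw [ez]
          _ = A.map (inclExtend D μ n) (fc.app D z) :=
              NatTrans.naturality_apply fc (inclExtend D μ n) z
      · exact ((key D z.1 μ hμ).2).trans (comm' D z).symm
    · apply NatTrans.ext
      funext E
      refine ConcreteCategory.hom_ext _ _ fun y => ?_
      exact (hspec E y).2
    · rintro h' ⟨hfst', hp'⟩
      apply NatTrans.ext
      funext E
      refine ConcreteCategory.hom_ext _ _ fun y => ?_
      show h'.app E y = hA E y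
      have hμ₀ : (Infinite.exists_notMem_finset E.E).choose ∉ E.E :=
        (Infinite.exists_notMem_finset E.E).choose_spec
      refine ExistsUnique.unique (exu E _ hμ₀ y) ⟨?_, ?_⟩ (hspec E y)
      · calc A.map (inclExtend E _ n) (h'.app E y)
            = h'.app _ (Y.map (inclExtend E _ n) y) :=
              (NatTrans.naturality_apply h' (inclExtend E _ n) y).symm
          _ = fc.app _ (Y.map (inclExtend E _ n) y, elt l n E hμ₀) :=
              ConcreteCategory.congr_hom (congrArg (fun t => NatTrans.app t _) hfst')
                ((Y.map (inclExtend E _ n) y, elt l n E hμ₀) :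
                  Y.obj _ × (single C l n ⟶ _))
      · exact ConcreteCategory.congr_hom (congrArg (fun t => NatTrans.app t E) hp') y
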